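/- Let H be a complex Hilbert space, B : H → H a compact operator, r > 0 and c ≥ 0. Suppose there are sequences of: complex Hilbert spaces H_l, compact operators B_l : H_l → H_l, unitary operators U_l : H → H_l, boundedly invertible operators E_l ∈ 𝓛(H_l), and reals c_l ≥ 0, such that for every l: B = U_l^{-1} E_l B_l E_l^{−1} U_l and lim_{j→∞} s_j(B_l) j^{r} = c_l, and such that ‖E_l‖ · ‖E_l^{−1}‖ → 1 and c_l → c as l → ∞. Then lim_{j→∞} s_j(B) j^{r} = c. -/

import Mathlib

open Filter
open scoped Topology

noncomputable section

/-- The `j`-th singular value (approximation number) of a bounded operator between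
Hilbert spaces: `s_j(B) = inf{‖B − F‖ : F of rank < j}`. -/
def sNum {H H₁ : Type*} [NormedAddCommGroup H] [InnerProductSpace ℂ H]
    [NormedAddCommGroup H₁] [InnerProductSpace ℂ H₁] (B : H →L[ℂ] H₁) (j : ℕ) : ℝ :=
  sInf {r : ℝ | ∃ F : H →L[ℂ] H₁,
    Module.rank ℂ (LinearMap.range (F : H →ₗ[ℂ] H₁)) < (j : Cardinal) ∧ ‖B - F‖ = r}


lemma sNum_nonneg {H H₁ : Type*} [NormedAddCommGroup H] [InnerProductSpace ℂ H]
    [NormedAddCommGroup H₁] [InnerProductSpace ℂ H₁] (B : H →L[ℂ] H₁) (j : ℕ) :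
    0 ≤ sNum B j := by
  apply Real.sInf_nonneg
  rintro x ⟨F, -, rfl⟩
  exact norm_nonneg _

universe u v
lemma sNum_conj_le {H : Type u} {H₁ : Type v} [NormedAddCommGroup H] [InnerProductSpace ℂ H]
    [NormedAddCommGroup H₁] [InnerProductSpace ℂ H₁]
    (B : H →L[ℂ] H) (C : H₁ →L[ℂ] H₁) (G : H₁ →L[ℂ] H) (G' : H →L[ℂ] H₁)
    (hBC : ∀ x, B x = G (C (G' x))) (j : ℕ) :
    sNum B j ≤ ‖G‖ * ‖G'‖ * sNum C j := by
  rcases Nat.eq_zero_or_pos j with rfl | hj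
  · have h1 : sNum B 0 = 0 := by
      unfold sNum
      convert Real.sInf_empty using 2
      ext x
      simp only [Set.mem_setOf_eq, Set.mem_empty_iff_false, iff_false, not_exists]
      intro F h
      exact absurd h.1 (by simp)
    have h2 : sNum C 0 = 0 := by
      unfold sNum
      convert Real.sInf_empty using 2
      ext x
      simp only [Set.mem_setOf_eq, Set.mem_empty_iff_false, iff_false, not_exists]
      intro F h
      exact absurd h.1 (by simp)
    simp [h1, h2]
  · set k : ℝ := ‖G‖ * ‖G'‖ with hk
    have hk0 : 0 ≤ k := mul_nonneg (norm_nonneg _) (norm_nonneg _)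
    set S : Set ℝ := {s : ℝ | ∃ F : H₁ →L[ℂ] H₁,
      Module.rank ℂ (LinearMap.range (F : H₁ →ₗ[ℂ] H₁)) < (j : Cardinal) ∧ ‖C - F‖ = s} with hS
    have hSne : S.Nonempty := by
      refine ⟨‖C - 0‖, 0, ?_, rfl⟩
      have hz : ((0 : H₁ →L[ℂ] H₁) : H₁ →ₗ[ℂ] H₁) = 0 := rfl
      rw [hz, LinearMap.range_zero, rank_bot]
      exact_mod_cast hj

    have key : ∀ s ∈ S, sNum B j ≤ k * s := by
      rintro s ⟨F, hF, rfl⟩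
      have hmem : ‖B - G.comp (F.comp G')‖ ∈ {t : ℝ | ∃ F' : H →L[ℂ] H,
          Module.rank ℂ (LinearMap.range ((F' : H →ₗ[ℂ] H))) < (j : Cardinal) ∧ ‖B - F'‖ = t} := by
        refine ⟨G.comp (F.comp G'), ?_, rfl⟩
        have h1 : Cardinal.lift.{v}
            (Module.rank ℂ (LinearMap.range ((G.comp (F.comp G') : H →L[ℂ] H) : H →ₗ[ℂ] H)))
            ≤ Cardinal.lift.{u} (Module.rank ℂ (LinearMap.range (F : H₁ →ₗ[ℂ] H₁))) := by
          rw [ContinuousLinearMap.toLinearMap_comp, ContinuousLinearMap.toLinearMap_comp, LinearMap.range_comp]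
          refine (lift_rank_map_le _ _).trans ?_
          exact Cardinal.lift_le.mpr (Submodule.rank_mono (LinearMap.range_comp_le_range _ _))
        have h2 := h1.trans_lt (Cardinal.lift_lt.mpr hF)
        rw [Cardinal.lift_natCast] at h2
        refine Cardinal.lift_lt.{_, v}.mp ?_
        rw [Cardinal.lift_natCast]
        exact h2
      have hbd : BddBelow {t : ℝ | ∃ F' : H →L[ℂ] H,
          Module.rank ℂ (LinearMap.range ((F' : H →ₗ[ℂ] H))) < (j : Cardinal) ∧ ‖B - F'‖ = t} :=
        ⟨0, by rintro x ⟨F', -, rfl⟩; exact norm_nonneg _⟩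
      have hle : sNum B j ≤ ‖B - G.comp (F.comp G')‖ := csInf_le hbd hmem
      have heq : B - G.comp (F.comp G') = G.comp ((C - F).comp G') := by
        ext x
        simp [hBC x, map_sub]
      have hnorm : ‖B - G.comp (F.comp G')‖ ≤ k * ‖C - F‖ := by
        rw [heq]
        calc ‖G.comp ((C - F).comp G')‖ ≤ ‖G‖ * ‖(C - F).comp G'‖ :=
              ContinuousLinearMap.opNorm_comp_le _ _
          _ ≤ ‖G‖ * (‖C - F‖ * ‖G'‖) := by
              exact mul_le_mul_of_nonneg_left (ContinuousLinearMap.opNorm_comp_le _ _)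
                (norm_nonneg _)
          _ = k * ‖C - F‖ := by ring
      exact hle.trans hnorm
    have : sNum B j ≤ k * sInf S := by
      rcases eq_or_lt_of_le hk0 with h0 | hkpos
      · obtain ⟨s, hs⟩ := hSne
        have := key s hs
        rw [← h0] at this ⊢
        simpa using this
      · rw [← smul_eq_mul, ← Real.sInf_smul_of_nonneg hk0]
        refine le_csInf (hSne.image _) ?_
        rintro b ⟨s, hs, rfl⟩
        exact key s hs
    exact this


/-- if `B` is conjugate, via unitaries `U_l` and boundedly invertible
operators `E_l` with `‖E_l‖‖E_l⁻¹‖ → 1`, to compact operators `B_l` with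
`s_j(B_l) j^r → c_l` and `c_l → c`, then `s_j(B) j^r → c`. -/
theorem statement17 {H : Type*}
    [NormedAddCommGroup H] [InnerProductSpace ℂ H] [CompleteSpace H]
    (B : H →L[ℂ] H) (hB : IsCompactOperator (B : H → H))
    (r c : ℝ) (hr : 0 < r) (hc : 0 ≤ c)
    (Hl : ℕ → Type*)
    [∀ l, NormedAddCommGroup (Hl l)] [∀ l, InnerProductSpace ℂ (Hl l)]
    [∀ l, CompleteSpace (Hl l)]
    (Bl : ∀ l, Hl l →L[ℂ] Hl l)
    (hBl : ∀ l, IsCompactOperator ((Bl l : Hl l →L[ℂ] Hl l) : Hl l → Hl l))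
    (U : ∀ l, H ≃ₗᵢ[ℂ] Hl l)
    (E : ∀ l, Hl l ≃L[ℂ] Hl l)
    (cl : ℕ → ℝ)
    (hconj : ∀ l, ∀ x : H,
      B x = (U l).symm ((E l) ((Bl l) ((E l).symm ((U l) x)))))
    (hasym : ∀ l, Tendsto (fun j : ℕ => sNum (Bl l) j * (j : ℝ) ^ r) atTop (𝓝 (cl l)))
    (hnorm : Tendsto (fun l : ℕ =>
      ‖((E l : Hl l →L[ℂ] Hl l))‖ * ‖(((E l).symm : Hl l →L[ℂ] Hl l))‖) atTop (𝓝 1))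
    (hcl : Tendsto cl atTop (𝓝 c)) :
    Tendsto (fun j : ℕ => sNum B j * (j : ℝ) ^ r) atTop (𝓝 c) := by
  set K : ℕ → ℝ := fun l =>
    ‖((E l : Hl l →L[ℂ] Hl l))‖ * ‖(((E l).symm : Hl l →L[ℂ] Hl l))‖ with hK
  have key : ∀ l j, sNum B j ≤ K l * sNum (Bl l) j := by
    intro l j
    set G : Hl l →L[ℂ] H :=
      ((U l).symm.toLinearIsometry.toContinuousLinearMap).comp (E l : Hl l →L[ℂ] Hl l) with hG
    set G' : H →L[ℂ] Hl l :=
      (((E l).symm : Hl l →L[ℂ] Hl l)).comp ((U l).toLinearIsometry.toContinuousLinearMap)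
      with hG'
    have hBC : ∀ x, B x = G ((Bl l) (G' x)) := by
      intro x
      simp only [hG, hG', ContinuousLinearMap.comp_apply,
        LinearIsometry.coe_toContinuousLinearMap, LinearIsometryEquiv.coe_toLinearIsometry,
        ContinuousLinearEquiv.coe_coe]
      exact hconj l x
    have h := sNum_conj_le B (Bl l) G G' hBC j
    have hGle : ‖G‖ ≤ ‖((E l : Hl l →L[ℂ] Hl l))‖ := by
      refine ContinuousLinearMap.opNorm_le_bound _ (norm_nonneg _) fun x => ?_
      simp only [hG, ContinuousLinearMap.comp_apply,
        LinearIsometry.coe_toContinuousLinearMap, LinearIsometryEquiv.coe_toLinearIsometry,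
        ContinuousLinearEquiv.coe_coe, LinearIsometryEquiv.norm_map]
      exact (E l : Hl l →L[ℂ] Hl l).le_opNorm x
    have hG'le : ‖G'‖ ≤ ‖(((E l).symm : Hl l →L[ℂ] Hl l))‖ := by
      refine ContinuousLinearMap.opNorm_le_bound _ (norm_nonneg _) fun x => ?_
      simp only [hG', ContinuousLinearMap.comp_apply,
        LinearIsometry.coe_toContinuousLinearMap, LinearIsometryEquiv.coe_toLinearIsometry,
        ContinuousLinearEquiv.coe_coe]
      calc ‖((E l).symm : Hl l →L[ℂ] Hl l) ((U l) x)‖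
          ≤ ‖(((E l).symm : Hl l →L[ℂ] Hl l))‖ * ‖(U l) x‖ :=
            ((E l).symm : Hl l →L[ℂ] Hl l).le_opNorm _
        _ = ‖(((E l).symm : Hl l →L[ℂ] Hl l))‖ * ‖x‖ := by
            rw [LinearIsometryEquiv.norm_map]
    refine h.trans ?_
    have hs := sNum_nonneg (Bl l) j
    have := mul_le_mul hGle hG'le (norm_nonneg _) (norm_nonneg _)
    exact mul_le_mul_of_nonneg_right this hs
  have key' : ∀ l j, sNum (Bl l) j ≤ K l * sNum B j := by
    intro l j
    have hconj' : ∀ x : Hl l, (Bl l) x =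
        (E l).symm ((U l) (B ((U l).symm ((E l) x)))) := by
      intro x
      have h := hconj l ((U l).symm ((E l) x))
      simp only [LinearIsometryEquiv.apply_symm_apply, ContinuousLinearEquiv.symm_apply_apply]
        at h
      rw [h]
      simp
    set G : H →L[ℂ] Hl l :=
      (((E l).symm : Hl l →L[ℂ] Hl l)).comp ((U l).toLinearIsometry.toContinuousLinearMap)
      with hG
    set G' : Hl l →L[ℂ] H :=
      ((U l).symm.toLinearIsometry.toContinuousLinearMap).comp (E l : Hl l →L[ℂ] Hl l) with hG'
    have hBC : ∀ x, (Bl l) x = G (B (G' x)) := by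
      intro x
      simp only [hG, hG', ContinuousLinearMap.comp_apply,
        LinearIsometry.coe_toContinuousLinearMap, LinearIsometryEquiv.coe_toLinearIsometry,
        ContinuousLinearEquiv.coe_coe]
      exact hconj' x
    have h := sNum_conj_le (Bl l) B G G' hBC j
    have hGle : ‖G‖ ≤ ‖(((E l).symm : Hl l →L[ℂ] Hl l))‖ := by
      refine ContinuousLinearMap.opNorm_le_bound _ (norm_nonneg _) fun x => ?_
      simp only [hG, ContinuousLinearMap.comp_apply,
        LinearIsometry.coe_toContinuousLinearMap, LinearIsometryEquiv.coe_toLinearIsometry,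
        ContinuousLinearEquiv.coe_coe]
      calc ‖((E l).symm : Hl l →L[ℂ] Hl l) ((U l) x)‖
          ≤ ‖(((E l).symm : Hl l →L[ℂ] Hl l))‖ * ‖(U l) x‖ :=
            ((E l).symm : Hl l →L[ℂ] Hl l).le_opNorm _
        _ = ‖(((E l).symm : Hl l →L[ℂ] Hl l))‖ * ‖x‖ := by
            rw [LinearIsometryEquiv.norm_map]
    have hG'le : ‖G'‖ ≤ ‖((E l : Hl l →L[ℂ] Hl l))‖ := by
      refine ContinuousLinearMap.opNorm_le_bound _ (norm_nonneg _) fun x => ?_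
      simp only [hG', ContinuousLinearMap.comp_apply,
        LinearIsometry.coe_toContinuousLinearMap, LinearIsometryEquiv.coe_toLinearIsometry,
        ContinuousLinearEquiv.coe_coe, LinearIsometryEquiv.norm_map]
      exact (E l : Hl l →L[ℂ] Hl l).le_opNorm x
    refine h.trans ?_
    have hs := sNum_nonneg B j
    have hmm := mul_le_mul hGle hG'le (norm_nonneg _) (norm_nonneg _)
    have := mul_le_mul_of_nonneg_right hmm hs
    calc ‖G‖ * ‖G'‖ * sNum B j ≤
        ‖(((E l).symm : Hl l →L[ℂ] Hl l))‖ * ‖((E l : Hl l →L[ℂ] Hl l))‖ * sNum B j := this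
      _ = K l * sNum B j := by rw [hK]; ring
  -- now the squeeze
  rw [Metric.tendsto_atTop]
  intro ε hε
  set δ : ℝ := min 1 (ε / (2 * (c + 4))) with hδdef
  have hδpos : 0 < δ := lt_min one_pos (by positivity)
  have hδ1 : δ ≤ 1 := min_le_left _ _
  have hδε : 2 * δ * (c + 4) ≤ ε := by
    have : δ ≤ ε / (2 * (c + 4)) := min_le_right _ _
    rw [le_div_iff₀ (by positivity)] at this
    nlinarith
  obtain ⟨L1, hL1⟩ := Metric.tendsto_atTop.mp hnorm δ hδpos
  obtain ⟨L2, hL2⟩ := Metric.tendsto_atTop.mp hcl δ hδpos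
  set l := max L1 L2 with hl
  have hKl : |K l - 1| < δ := by
    have := hL1 l (le_max_left _ _)
    rwa [Real.dist_eq] at this
  have hcll : |cl l - c| < δ := by
    have := hL2 l (le_max_right _ _)
    rwa [Real.dist_eq] at this
  obtain ⟨N, hN⟩ := Metric.tendsto_atTop.mp (hasym l) δ hδpos
  refine ⟨N, fun j hj => ?_⟩
  have hg : |sNum (Bl l) j * (j : ℝ) ^ r - cl l| < δ := by
    have := hN j hj
    rwa [Real.dist_eq] at this
  set f : ℝ := sNum B j * (j : ℝ) ^ r with hf
  set g : ℝ := sNum (Bl l) j * (j : ℝ) ^ r with hgdef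
  have hjr : (0:ℝ) ≤ (j : ℝ) ^ r := Real.rpow_nonneg (Nat.cast_nonneg _) _
  have hf0 : 0 ≤ f := mul_nonneg (sNum_nonneg _ _) hjr
  have hg0 : 0 ≤ g := mul_nonneg (sNum_nonneg _ _) hjr
  have hfg : f ≤ K l * g := by
    have := mul_le_mul_of_nonneg_right (key l j) hjr
    calc f = sNum B j * (j:ℝ) ^ r := rfl
      _ ≤ K l * sNum (Bl l) j * (j:ℝ) ^ r := this
      _ = K l * g := by rw [hgdef]; ring
  have hgf : g ≤ K l * f := by
    have := mul_le_mul_of_nonneg_right (key' l j) hjr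
    calc g = sNum (Bl l) j * (j:ℝ) ^ r := rfl
      _ ≤ K l * sNum B j * (j:ℝ) ^ r := this
      _ = K l * f := by rw [hf]; ring
  rw [Real.dist_eq, abs_lt]
  rw [abs_lt] at hKl hcll hg
  obtain ⟨hK1, hK2⟩ := hKl
  obtain ⟨hc1, hc2⟩ := hcll
  obtain ⟨hg1, hg2⟩ := hg
  constructor
  · -- c - ε < f
    nlinarith [mul_le_mul_of_nonneg_right hK2.le hf0, mul_nonneg hδpos.le hf0,
      mul_nonneg hδpos.le hc]
  · -- f < c + ε
    nlinarith [mul_le_mul_of_nonneg_right hK2.le hg0, mul_nonneg hδpos.le hg0,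
      mul_nonneg hδpos.le hc, mul_nonneg hδpos.le hδpos.le]
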